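/- arXiv:math/0412451 — 7 statements merged into one kernel-verified Lean document; each statement's English description precedes it below -/
import Mathlib

section
/- Let A be a unital C*-algebra and ψ_1, …, ψ_n ∈ A elements such that every product ψ_l*·ψ_m lies in the centre of A and Σ_{l=1}^n ψ_l·ψ_l* = 1. Then the map σ : A → A defined by σ(a) := Σ_{l=1}^n ψ_l·a·ψ_l* is a unital *-homomorphism, and σ(a)·ψ_k = ψ_k·a for all a ∈ A and all k (so every finitely generated Hilbert bimodule over the centre contained in A induces an inner endomorphism). -/
/-- Let `A` be a unital C*-algebra and `ψ_1, …, ψ_n ∈ A` elements such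
that every product `ψ_l*·ψ_m` lies in the centre of `A` and `Σ_l ψ_l·ψ_l* = 1`.  Then the
map `σ(a) := Σ_l ψ_l·a·ψ_l*` is a unital *-homomorphism, and `σ(a)·ψ_k = ψ_k·a` for all
`a ∈ A` and all `k`: every finitely generated Hilbert bimodule over the centre contained
in `A` induces an inner endomorphism. -/
theorem inner_endomorphism_induced_by_bimodule
    {A : Type*} [NormedRing A] [StarRing A] [CStarRing A] [CompleteSpace A]
    [NormedAlgebra ℂ A] [StarModule ℂ A]
    (n : ℕ) (ψ : Fin n → A)
    (hcentral : ∀ (l m : Fin n) (a : A), (star (ψ l) * ψ m) * a = a * (star (ψ l) * ψ m))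
    (hsum : ∑ l, ψ l * star (ψ l) = 1)
    (σ : A → A) (hσ : ∀ a : A, σ a = ∑ l, ψ l * a * star (ψ l)) :
    σ 1 = 1 ∧
    (∀ a b : A, σ (a * b) = σ a * σ b) ∧
    (∀ a b : A, σ (a + b) = σ a + σ b) ∧
    (∀ (c : ℂ) (a : A), σ (c • a) = c • σ a) ∧
    (∀ a : A, σ (star a) = star (σ a)) ∧
    (∀ (a : A) (k : Fin n), σ a * ψ k = ψ k * a) := by
  refine ⟨?_, ?_, ?_, ?_, ?_, ?_⟩
  · rw [hσ]; simp only [mul_one]; exact hsum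
  · intro a b
    rw [hσ (a*b), hσ a, hσ b, Finset.sum_mul_sum]
    have : ∀ l : Fin n, ∑ m, (ψ l * a * star (ψ l)) * (ψ m * b * star (ψ m))
        = ψ l * (a * b) * star (ψ l) := by
      intro l
      have key : ∀ m : Fin n, (ψ l * a * star (ψ l)) * (ψ m * b * star (ψ m))
          = (ψ l * (a * b) * star (ψ l)) * (ψ m * star (ψ m)) := by
        intro m
        have h1 : (star (ψ l) * ψ m) * (b * star (ψ m))
            = (b * star (ψ m)) * (star (ψ l) * ψ m) := hcentral l m _
        have h2 : (star (ψ l) * ψ m) * star (ψ m)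
            = star (ψ m) * (star (ψ l) * ψ m) := hcentral l m _
        calc (ψ l * a * star (ψ l)) * (ψ m * b * star (ψ m))
            = ψ l * a * ((star (ψ l) * ψ m) * (b * star (ψ m))) := by
              simp only [mul_assoc]
          _ = ψ l * a * ((b * star (ψ m)) * (star (ψ l) * ψ m)) := by rw [h1]
          _ = ψ l * a * (b * ((star (ψ l) * ψ m) * star (ψ m))) := by
              rw [mul_assoc b, ← h2]
          _ = (ψ l * (a * b) * star (ψ l)) * (ψ m * star (ψ m)) := by
              simp only [mul_assoc]
      calc ∑ m, (ψ l * a * star (ψ l)) * (ψ m * b * star (ψ m))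
          = ∑ m, (ψ l * (a * b) * star (ψ l)) * (ψ m * star (ψ m)) := by
            exact Finset.sum_congr rfl fun m _ => key m
        _ = (ψ l * (a * b) * star (ψ l)) * ∑ m, ψ m * star (ψ m) := by
            rw [Finset.mul_sum]
        _ = ψ l * (a * b) * star (ψ l) := by rw [hsum, mul_one]
    exact (Finset.sum_congr rfl fun l _ => this l).symm
  · intro a b
    simp only [hσ, mul_add, add_mul, Finset.sum_add_distrib]
  · intro c a
    simp only [hσ, Finset.smul_sum, mul_smul_comm, smul_mul_assoc]
  · intro a
    simp only [hσ, star_sum, star_mul, star_star, mul_assoc]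
  · intro a k
    rw [hσ, Finset.sum_mul]
    have : ∀ l : Fin n, (ψ l * a * star (ψ l)) * ψ k
        = (ψ l * star (ψ l)) * (ψ k * a) := by
      intro l
      calc (ψ l * a * star (ψ l)) * ψ k
          = ψ l * (a * (star (ψ l) * ψ k)) := by simp only [mul_assoc]
        _ = ψ l * ((star (ψ l) * ψ k) * a) := by rw [← hcentral]
        _ = (ψ l * star (ψ l)) * (ψ k * a) := by simp only [mul_assoc]
    rw [Finset.sum_congr rfl fun l _ => this l, ← Finset.sum_mul, hsum, one_mul]
end

section
/- Let A be a unital C*-algebra, ρ : A → A a unital *-homomorphism, and p ↦ ε(p) a group homomorphism from ℙ_∞ into the unitary group of A such that ε(𝕊p) = ρ(ε(p)) for all p ∈ ℙ_∞ and such that ε := ε(1,1) satisfies ε·ρ²(a) = ρ²(a)·ε for all a ∈ A. Then ε(p) ∈ (ρ^n,ρ^n) for every n ∈ ℕ and every p ∈ ℙ_n, i.e. ε(p) commutes with ρ^n(a) for all a ∈ A. -/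
/-- The predicate defining the group `ℙ_∞`: a permutation of `ℕ` belongs to `ℙ_∞`
iff it moves only finitely many points. -/
def HasFiniteSupp (p : Equiv.Perm ℕ) : Prop := {x : ℕ | p x ≠ x}.Finite

/-- Auxiliary function for the shift. -/
def shiftFun (f : ℕ → ℕ) : ℕ → ℕ
  | 0 => 0
  | n + 1 => f n + 1

/-- The shift `𝕊` on permutations of `ℕ` (`0`-indexed): `(𝕊p)(0) = 0`,
`(𝕊p)(n+1) = p(n)+1`. -/
def shiftPerm (p : Equiv.Perm ℕ) : Equiv.Perm ℕ where
  toFun := shiftFun p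
  invFun := shiftFun p.symm
  left_inv := by intro n; cases n <;> simp [shiftFun]
  right_inv := by intro n; cases n <;> simp [shiftFun]

/-- Auxiliary function for the block permutation. -/
def blockFun (r s : ℕ) (n : ℕ) : ℕ :=
  if n < r then n + s else if n < r + s then n - r else n

/-- The block permutation `(r,s) ∈ ℙ_{r+s}` permuting the first `r` terms with the
remaining `s` (`0`-indexed: `i ↦ i+s` for `i < r`, `i ↦ i-r` for `r ≤ i < r+s`,
fixing all other points). -/
def blockPerm (r s : ℕ) : Equiv.Perm ℕ where
  toFun := blockFun r s
  invFun := blockFun s r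
  left_inv := by intro n; simp only [blockFun]; split_ifs <;> omega
  right_inv := by intro n; simp only [blockFun]; split_ifs <;> omega

/-- A weak permutation symmetry for the unital *-endomorphism `ρ` of `A`: a group
homomorphism `p ↦ ε(p)` from `ℙ_∞` into the unitary group of `A` such that
`ε(𝕊p) = ρ(ε(p))` for all `p ∈ ℙ_∞` and `ε(p) ∈ (ρ^n, ρ^n)` for all `p ∈ ℙ_n`
(where `ℙ_n` is the subgroup of permutations fixing every point out of the first `n`). -/
structure WeakPermSymm {A : Type*} [NormedRing A] [StarRing A] [CStarRing A]
    [CompleteSpace A] [NormedAlgebra ℂ A] [StarModule ℂ A]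
    (ρ : A →⋆ₐ[ℂ] A) (ε : Equiv.Perm ℕ → A) : Prop where
  map_one : ε 1 = 1
  map_mul : ∀ p q : Equiv.Perm ℕ, HasFiniteSupp p → HasFiniteSupp q →
    ε (p * q) = ε p * ε q
  mem_unitary : ∀ p : Equiv.Perm ℕ, HasFiniteSupp p → ε p ∈ unitary A
  shift : ∀ p : Equiv.Perm ℕ, HasFiniteSupp p → ε (shiftPerm p) = ρ (ε p)
  comm : ∀ (n : ℕ) (p : Equiv.Perm ℕ), (∀ m : ℕ, n ≤ m → p m = m) →
    ∀ a : A, ε p * (⇑ρ)^[n] a = (⇑ρ)^[n] a * ε p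

variable {A : Type*} [NormedRing A] [StarRing A] [CStarRing A] [CompleteSpace A]
  [NormedAlgebra ℂ A] [StarModule ℂ A]

/-- The intertwiner space `(ρ^r, ρ^s) := {t ∈ A : ρ^s(a)·t = t·ρ^r(a) ∀ a ∈ A}`. -/
def IsIntertwiner (ρ : A →⋆ₐ[ℂ] A) (r s : ℕ) (t : A) : Prop :=
  ∀ a : A, (⇑ρ)^[s] a * t = t * (⇑ρ)^[r] a

/-- The symmetry intertwiner space
`(ρ^r, ρ^s)_ε := {t ∈ (ρ^r, ρ^s) : ε(s,1)·t = ρ(t)·ε(r,1)}`. -/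
def IsSymIntertwiner (ρ : A →⋆ₐ[ℂ] A) (ε : Equiv.Perm ℕ → A) (r s : ℕ) (t : A) : Prop :=
  IsIntertwiner ρ r s t ∧ ε (blockPerm s 1) * t = ρ t * ε (blockPerm r 1)

lemma iterMul (ρ : A →⋆ₐ[ℂ] A) (j : ℕ) (x y : A) :
    (⇑ρ)^[j] (x * y) = (⇑ρ)^[j] x * (⇑ρ)^[j] y := by
  induction j generalizing x y with
  | zero => simp
  | succ j ih => simp [Function.iterate_succ_apply', ih, map_mul]

lemma iterStar (ρ : A →⋆ₐ[ℂ] A) (j : ℕ) (x : A) :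
    (⇑ρ)^[j] (star x) = star ((⇑ρ)^[j] x) := by
  induction j generalizing x with
  | zero => simp
  | succ j ih => simp [Function.iterate_succ_apply', ih, map_star]

lemma hfs_swap (j k : ℕ) : HasFiniteSupp (Equiv.swap j k) := by
  apply Set.Finite.subset ((Set.finite_singleton k).insert j)
  intro x hx
  simp only [Set.mem_setOf_eq] at hx
  by_contra hc
  simp only [Set.mem_insert_iff, Set.mem_singleton_iff, not_or] at hc
  exact hx (Equiv.swap_apply_of_ne_of_ne hc.1 hc.2)

lemma hfs_of_fix (p : Equiv.Perm ℕ) (n : ℕ) (h : ∀ m : ℕ, n ≤ m → p m = m) :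
    HasFiniteSupp p := by
  apply Set.Finite.subset (Set.finite_Iio n)
  intro x hx
  simp only [Set.mem_setOf_eq] at hx
  simp only [Set.mem_Iio]
  by_contra hc
  exact hx (h x (le_of_not_gt hc))

lemma block11_eq_swap : blockPerm 1 1 = Equiv.swap 0 1 := by
  ext n
  simp only [blockPerm, blockFun, Equiv.coe_fn_mk, Equiv.swap_apply_def]
  split_ifs <;> omega

lemma shift_swap (j : ℕ) :
    shiftPerm (Equiv.swap j (j + 1)) = Equiv.swap (j + 1) (j + 2) := by
  ext n
  cases n with
  | zero =>
    simp only [shiftPerm, Equiv.coe_fn_mk, shiftFun, Equiv.swap_apply_def]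
    split_ifs <;> first | omega | tauto
  | succ m =>
    simp only [shiftPerm, Equiv.coe_fn_mk, shiftFun, Equiv.swap_apply_def]
    split_ifs <;> first | omega | tauto

/-- Let `A` be a unital C*-algebra, `ρ : A → A` a unital
*-homomorphism, and `p ↦ ε(p)` a group homomorphism from `ℙ_∞` into the unitary group
of `A` such that `ε(𝕊p) = ρ(ε(p))` for all `p ∈ ℙ_∞` and such that `ε := ε(1,1)`
satisfies `ε·ρ²(a) = ρ²(a)·ε` for all `a ∈ A`.  Then `ε(p) ∈ (ρ^n, ρ^n)` for every
`n ∈ ℕ` and every `p ∈ ℙ_n`, i.e. `ε(p)` commutes with `ρ^n(a)` for all `a ∈ A`. -/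
theorem weak_perm_symmetry_of_flip
    (ρ : A →⋆ₐ[ℂ] A) (ε : Equiv.Perm ℕ → A)
    (hone : ε 1 = 1)
    (hmul : ∀ p q : Equiv.Perm ℕ, HasFiniteSupp p → HasFiniteSupp q →
      ε (p * q) = ε p * ε q)
    (hunitary : ∀ p : Equiv.Perm ℕ, HasFiniteSupp p → ε p ∈ unitary A)
    (hshift : ∀ p : Equiv.Perm ℕ, HasFiniteSupp p → ε (shiftPerm p) = ρ (ε p))
    (hflip : ∀ a : A, ε (blockPerm 1 1) * ρ (ρ a) = ρ (ρ a) * ε (blockPerm 1 1)) :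
    ∀ (n : ℕ) (p : Equiv.Perm ℕ), (∀ m : ℕ, n ≤ m → p m = m) →
      ∀ a : A, ε p * (⇑ρ)^[n] a = (⇑ρ)^[n] a * ε p := by
  -- ε of adjacent swaps
  have hεswap : ∀ j : ℕ, ε (Equiv.swap j (j + 1)) = (⇑ρ)^[j] (ε (blockPerm 1 1)) := by
    intro j
    induction j with
    | zero => rw [block11_eq_swap]; rfl
    | succ j ih =>
      have : Equiv.swap (j + 1) (j + 2) = shiftPerm (Equiv.swap j (j + 1)) :=
        (shift_swap j).symm
      rw [this, hshift _ (hfs_swap _ _), ih, Function.iterate_succ_apply']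
  -- adjacent swaps commute with ρ^n for j + 2 ≤ n
  have hswapcomm : ∀ j n : ℕ, j + 2 ≤ n → ∀ a : A,
      ε (Equiv.swap j (j + 1)) * (⇑ρ)^[n] a = (⇑ρ)^[n] a * ε (Equiv.swap j (j + 1)) := by
    intro j n hjn a
    obtain ⟨m, rfl⟩ : ∃ m, n = j + (2 + m) :=
      ⟨n - j - 2, by omega⟩
    have h1 : (⇑ρ)^[j + (2 + m)] a = (⇑ρ)^[j] (ρ (ρ ((⇑ρ)^[m] a))) := by
      rw [Function.iterate_add_apply]
      congr 1
      rw [Function.iterate_add_apply]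
      rfl
    rw [hεswap, h1, ← iterMul, ← iterMul, hflip]
  -- fixing all points ≥ n means p n ≤ n
  have hple : ∀ (p : Equiv.Perm ℕ) (n : ℕ), (∀ m : ℕ, n + 1 ≤ m → p m = m) → p n ≤ n := by
    intro p n h
    by_contra hc
    have h2 : p (p n) = p n := h _ (by omega)
    have := p.injective h2
    omega
  intro n
  induction n with
  | zero =>
    intro p hp a
    have hp0 : p = 1 := by
      ext m
      exact hp m (Nat.zero_le m)
    simp [hp0, hone]
  | succ n ih =>
    -- inner induction on fuel k with n ≤ p n + k
    have inner : ∀ k : ℕ, ∀ p : Equiv.Perm ℕ, (∀ m : ℕ, n + 1 ≤ m → p m = m) →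
        n ≤ p n + k → ∀ a : A, ε p * (⇑ρ)^[n + 1] a = (⇑ρ)^[n + 1] a * ε p := by
      intro k
      induction k with
      | zero =>
        intro p hp hk a
        have hpn : p n = n := le_antisymm (hple p n hp) (by omega)
        have hp' : ∀ m : ℕ, n ≤ m → p m = m := by
          intro m hm
          rcases eq_or_lt_of_le hm with rfl | hlt
          · exact hpn
          · exact hp m hlt
        have := ih p hp' (ρ a)
        rwa [← Function.iterate_succ_apply] at this
      | succ k ihk =>
        intro p hp hk a
        rcases eq_or_lt_of_le (hple p n hp) with hpn | hpn
        · exact ihk p hp (by omega) a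
        · set j := p n with hj
          have hj2 : j + 2 ≤ n + 1 := by omega
          set s := Equiv.swap j (j + 1) with hs
          have hp' : ∀ m : ℕ, n + 1 ≤ m → (s * p) m = m := by
            intro m hm
            have : p m = m := hp m hm
            simp only [Equiv.Perm.mul_apply, this]
            exact Equiv.swap_apply_of_ne_of_ne (by omega) (by omega)
          have hpn' : (s * p) n = j + 1 := by
            simp [hs, Equiv.Perm.mul_apply, ← hj]
          have hcomm' := ihk (s * p) hp' (by omega)
          have hmulsp : ε (s * p) = ε s * ε p :=
            hmul s p (hfs_swap _ _) (hfs_of_fix p (n + 1) hp)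
          have hu : star (ε s) * ε s = 1 := (hunitary s (hfs_swap _ _)).1
          have hεp : ε p = star (ε s) * ε (s * p) := by
            rw [hmulsp, ← mul_assoc, hu, one_mul]
          have hscomm : ∀ b : A, ε s * (⇑ρ)^[n + 1] b = (⇑ρ)^[n + 1] b * ε s :=
            hswapcomm j (n + 1) hj2
          have hstarcomm : star (ε s) * (⇑ρ)^[n + 1] a = (⇑ρ)^[n + 1] a * star (ε s) := by
            have := congrArg star (hscomm (star a))
            simpa [star_mul, iterStar] using this.symm
          rw [hεp, mul_assoc, hcomm' a, ← mul_assoc, hstarcomm, mul_assoc]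
    intro p hp a
    exact inner n p hp (by omega) a
end

section
/- Let ρ be a unital *-endomorphism of a unital C*-algebra A with a weak permutation symmetry ε. Then for all r, s, k ∈ ℕ the inclusion (ρ^r,ρ^s)_ε ⊆ (ρ^{r+k},ρ^{s+k})_ε holds; in particular every t ∈ (ρ^r,ρ^s)_ε satisfies ε(s+k,1)·t = ρ(t)·ε(r+k,1). -/
variable {A : Type*} [NormedRing A] [StarRing A] [CStarRing A] [CompleteSpace A]
  [NormedAlgebra ℂ A] [StarModule ℂ A]

lemma hfs_blockPerm (r s : ℕ) : HasFiniteSupp (blockPerm r s) := by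
  apply Set.Finite.subset (Set.finite_Iio (r + s))
  intro x hx
  simp only [Set.mem_setOf_eq] at hx
  by_contra h
  simp only [Set.mem_Iio, not_lt] at h
  apply hx
  show blockFun r s x = x
  simp only [blockFun]
  split_ifs <;> omega

lemma shiftPerm_iterate_apply (p : Equiv.Perm ℕ) :
    ∀ n m, (shiftPerm^[n] p) m = if m < n then m else p (m - n) + n := by
  intro n
  induction n with
  | zero => intro m; simp
  | succ n ih =>
    intro m
    rw [Function.iterate_succ_apply']
    cases m with
    | zero => simp [shiftPerm, shiftFun]
    | succ m =>
      have h1 : (shiftPerm (shiftPerm^[n] p)) (m + 1) = (shiftPerm^[n] p) m + 1 := rfl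
      have h2 : m + 1 - (n + 1) = m - n := by omega
      rw [h1, ih m, h2]
      split_ifs <;> omega

lemma hfs_shiftPerm_iterate (p : Equiv.Perm ℕ) (hp : HasFiniteSupp p) (n : ℕ) :
    HasFiniteSupp (shiftPerm^[n] p) := by
  apply Set.Finite.subset (hp.image (· + n))
  intro m hm
  simp only [Set.mem_setOf_eq] at hm
  rw [shiftPerm_iterate_apply] at hm
  split_ifs at hm with h
  · exact absurd rfl hm
  · exact ⟨m - n, by intro hc; exact hm (by omega), by show m - n + n = m; omega⟩

lemma eps_shift_iterate {A : Type*} [NormedRing A] [StarRing A] [CStarRing A]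
    [CompleteSpace A] [NormedAlgebra ℂ A] [StarModule ℂ A]
    {ρ : A →⋆ₐ[ℂ] A} {ε : Equiv.Perm ℕ → A} (hws : WeakPermSymm ρ ε)
    (p : Equiv.Perm ℕ) (hp : HasFiniteSupp p) :
    ∀ n, ε (shiftPerm^[n] p) = (⇑ρ)^[n] (ε p) := by
  intro n
  induction n with
  | zero => rfl
  | succ n ih =>
    rw [Function.iterate_succ_apply', Function.iterate_succ_apply',
      hws.shift _ (hfs_shiftPerm_iterate p hp n), ih]

lemma blockPerm_succ (n : ℕ) :
    blockPerm (n + 1) 1 = blockPerm n 1 * (shiftPerm^[n] (blockPerm 1 1)) := by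
  ext m
  rw [Equiv.Perm.mul_apply, shiftPerm_iterate_apply]
  show blockFun (n + 1) 1 m = blockFun n 1 (if m < n then m else blockFun 1 1 (m - n) + n)
  simp only [blockFun]
  split_ifs <;> omega

lemma eps_blockPerm_succ {A : Type*} [NormedRing A] [StarRing A] [CStarRing A]
    [CompleteSpace A] [NormedAlgebra ℂ A] [StarModule ℂ A]
    {ρ : A →⋆ₐ[ℂ] A} {ε : Equiv.Perm ℕ → A} (hws : WeakPermSymm ρ ε) (n : ℕ) :
    ε (blockPerm (n + 1) 1) = ε (blockPerm n 1) * (⇑ρ)^[n] (ε (blockPerm 1 1)) := by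
  rw [blockPerm_succ,
    hws.map_mul _ _ (hfs_blockPerm n 1) (hfs_shiftPerm_iterate _ (hfs_blockPerm 1 1) n),
    eps_shift_iterate hws _ (hfs_blockPerm 1 1)]

lemma isIntertwiner_mono {A : Type*} [NormedRing A] [StarRing A] [CStarRing A]
    [CompleteSpace A] [NormedAlgebra ℂ A] [StarModule ℂ A]
    {ρ : A →⋆ₐ[ℂ] A} {r s : ℕ} {t : A} (h : IsIntertwiner ρ r s t) (k : ℕ) :
    IsIntertwiner ρ (r + k) (s + k) t := by
  intro a
  rw [Function.iterate_add_apply, Function.iterate_add_apply]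
  exact h _

/-- Let `ρ` be a unital *-endomorphism of a unital C*-algebra `A` with
a weak permutation symmetry `ε`.  Then for all `r, s, k ∈ ℕ` the inclusion
`(ρ^r, ρ^s)_ε ⊆ (ρ^{r+k}, ρ^{s+k})_ε` holds; in particular every `t ∈ (ρ^r, ρ^s)_ε`
satisfies `ε(s+k,1)·t = ρ(t)·ε(r+k,1)`. -/
theorem symIntertwiner_mono
    (ρ : A →⋆ₐ[ℂ] A) (ε : Equiv.Perm ℕ → A) (hws : WeakPermSymm ρ ε)
    (r s k : ℕ) (t : A) (ht : IsSymIntertwiner ρ ε r s t) :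
    IsSymIntertwiner ρ ε (r + k) (s + k) t ∧
      ε (blockPerm (s + k) 1) * t = ρ t * ε (blockPerm (r + k) 1) := by
  have key : ∀ k, IsSymIntertwiner ρ ε (r + k) (s + k) t := by
    intro k
    induction k with
    | zero => exact ht
    | succ k ih =>
      refine ⟨isIntertwiner_mono ht.1 (k + 1), ?_⟩
      have hs : s + (k + 1) = (s + k) + 1 := rfl
      have hr : r + (k + 1) = (r + k) + 1 := rfl
      rw [hs, hr, eps_blockPerm_succ hws (s + k), eps_blockPerm_succ hws (r + k)]
      calc ε (blockPerm (s + k) 1) * (⇑ρ)^[s + k] (ε (blockPerm 1 1)) * t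
          = ε (blockPerm (s + k) 1) * ((⇑ρ)^[s + k] (ε (blockPerm 1 1)) * t) := by
            rw [mul_assoc]
        _ = ε (blockPerm (s + k) 1) * (t * (⇑ρ)^[r + k] (ε (blockPerm 1 1))) := by
            rw [isIntertwiner_mono ht.1 k _]
        _ = ε (blockPerm (s + k) 1) * t * (⇑ρ)^[r + k] (ε (blockPerm 1 1)) := by
            rw [mul_assoc]
        _ = ρ t * ε (blockPerm (r + k) 1) * (⇑ρ)^[r + k] (ε (blockPerm 1 1)) := by
            rw [ih.2]
        _ = ρ t * (ε (blockPerm (r + k) 1) * (⇑ρ)^[r + k] (ε (blockPerm 1 1))) := by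
            rw [mul_assoc]
  exact ⟨key k, (key k).2⟩
end

section
/- Let ρ be a unital *-endomorphism of a unital C*-algebra A with a weak permutation symmetry ε, let d ≥ 2, set P := P_{ε,d} and C := C(X^ρ), and let R_1,…,R_m ∈ A and S_1,…,S_n ∈ A satisfy: R_i·a = ρ^d(a)·R_i and S_j·a = ρ^d(a)·S_j for all a ∈ A; Σ_i R_i·R_i* = Σ_j S_j·S_j* = P; P·R_i = R_i and P·S_j = S_j for all i,j; Σ_i R_i*·R_i = 1; R_i*·ρ(R_k) = (−1)^{d−1}·d^{−1}·R_i*·R_k and S_j*·ρ(S_l) = (−1)^{d−1}·d^{−1}·S_j*·S_l for all indices; and for all i,k there exists f_{ik} ∈ C with R_k·R_i* = f_{ik}·P. Then every z_{ij} := R_i*·S_j belongs to C, and S_j = Σ_i R_i·z_{ij}, R_i = Σ_j S_j·z_{ij}* ; consequently the closed right C-submodules of A generated by {R_i} and by {S_j} coincide (the Hilbert bimodule implementing the special conjugate property is unique). -/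
variable {A : Type*} [NormedRing A] [StarRing A] [CStarRing A] [CompleteSpace A]
  [NormedAlgebra ℂ A] [StarModule ℂ A]

/-- The embedding of the permutation group of `d` objects into `Equiv.Perm ℕ`; its
range is exactly the subgroup `ℙ_d` of finitely supported permutations of `ℕ` fixing
every point out of the first `d`. -/
def permOfFin (d : ℕ) (q : Equiv.Perm (Fin d)) : Equiv.Perm ℕ :=
  q.extendDomain Fin.equivSubtype

/-- The totally antisymmetric element
`P_{ε,d} := (d!)⁻¹ · Σ_{p ∈ ℙ_d} sign(p)·ε(p)`. -/
noncomputable def Peps (ε : Equiv.Perm ℕ → A) (d : ℕ) : A :=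
  ((d.factorial : ℂ))⁻¹ •
    ∑ q : Equiv.Perm (Fin d), ((Equiv.Perm.sign q : ℤ) : ℂ) • ε (permOfFin d q)

/-- The set `C(X^ρ)` of central `ρ`-invariant elements of `A`:
`C(X^ρ) := {f ∈ A : f·a = a·f ∀ a ∈ A, ρ(f) = f}`. -/
def IsCentralFixed (ρ : A →⋆ₐ[ℂ] A) (f : A) : Prop :=
  (∀ a : A, f * a = a * f) ∧ ρ f = f


section Aux

lemma hasFiniteSupp_permOfFin (d : ℕ) (q : Equiv.Perm (Fin d)) :
    HasFiniteSupp (permOfFin d q) := by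
  apply Set.Finite.subset (Set.finite_Iio d)
  intro x hx
  simp only [Set.mem_setOf_eq, permOfFin] at hx
  by_contra hxd
  exact hx (q.extendDomain_apply_not_subtype Fin.equivSubtype (by simpa using hxd))

lemma hasFiniteSupp_inv {p : Equiv.Perm ℕ} (hp : HasFiniteSupp p) :
    HasFiniteSupp p⁻¹ := by
  have h : {x : ℕ | p⁻¹ x ≠ x} = {x : ℕ | p x ≠ x} := by
    ext x
    simp only [Set.mem_setOf_eq, ne_eq, Equiv.Perm.inv_eq_iff_eq]
    constructor <;> (intro h h2; exact h h2.symm)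
  rw [HasFiniteSupp, h]; exact hp

lemma star_eps {ρ : A →⋆ₐ[ℂ] A} {ε : Equiv.Perm ℕ → A} (hws : WeakPermSymm ρ ε)
    {p : Equiv.Perm ℕ} (hp : HasFiniteSupp p) : star (ε p) = ε p⁻¹ := by
  have h1 : ε p⁻¹ * ε p = 1 := by
    rw [← hws.map_mul _ _ (hasFiniteSupp_inv hp) hp, inv_mul_cancel, hws.map_one]
  have h2 : ε p * star (ε p) = 1 := (Unitary.mem_iff.mp (hws.mem_unitary p hp)).2
  exact (left_inv_eq_right_inv h1 h2).symm

lemma star_Peps {ρ : A →⋆ₐ[ℂ] A} {ε : Equiv.Perm ℕ → A} (hws : WeakPermSymm ρ ε)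
    (d : ℕ) : star (Peps ε d : A) = Peps ε d := by
  have h2 : ∀ q : Equiv.Perm (Fin d),
      star ((((Equiv.Perm.sign q : ℤ)) : ℂ) • ε (permOfFin d q)) =
        (((Equiv.Perm.sign q⁻¹ : ℤ)) : ℂ) • ε (permOfFin d q⁻¹) := by
    intro q
    rw [star_smul, star_eps hws (hasFiniteSupp_permOfFin d q)]
    rw [show (permOfFin d q)⁻¹ = permOfFin d q⁻¹ from rfl]
    congr 1
    simp [Equiv.Perm.sign_inv]
  rw [Peps, star_smul, star_sum]
  simp_rw [h2]
  rw [show (star ((d.factorial : ℂ)⁻¹)) = ((d.factorial : ℂ))⁻¹ by simp]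
  congr 1
  exact Fintype.sum_equiv (Equiv.inv _) _ _ (fun q => by simp)

lemma rho_iter_star (ρ : A →⋆ₐ[ℂ] A) (k : ℕ) (a : A) :
    (⇑ρ)^[k] (star a) = star ((⇑ρ)^[k] a) := by
  induction k generalizing a with
  | zero => rfl
  | succ k ih => simp [Function.iterate_succ_apply, map_star, ih]

end Aux

/-- (Uniqueness of the Hilbert bimodule implementing the special
conjugate property.)  Let `ρ` be a unital *-endomorphism of a unital C*-algebra `A`
with a weak permutation symmetry `ε`, let `d ≥ 2`, set `P := P_{ε,d}` and
`C := C(X^ρ)`, and let `R_1, …, R_m` and `S_1, …, S_n` be sets of generators of Hilbert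
bimodules implementing the special conjugate property (see the hypotheses below).
Then every `z_{ij} := R_i*·S_j` belongs to `C`, and `S_j = Σ_i R_i·z_{ij}`,
`R_i = Σ_j S_j·z_{ij}*`; consequently the closed right `C`-submodules of `A` generated
by `{R_i}` and by `{S_j}` coincide. -/
theorem special_conjugate_bimodule_unique
    (ρ : A →⋆ₐ[ℂ] A) (ε : Equiv.Perm ℕ → A) (hws : WeakPermSymm ρ ε)
    (d : ℕ) (hd : 2 ≤ d) (m n : ℕ) (R : Fin m → A) (S : Fin n → A)
    (hR0 : ∀ (i : Fin m) (a : A), R i * a = (⇑ρ)^[d] a * R i)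
    (hS0 : ∀ (j : Fin n) (a : A), S j * a = (⇑ρ)^[d] a * S j)
    (hRP : ∑ i, R i * star (R i) = Peps ε d)
    (hSP : ∑ j, S j * star (S j) = Peps ε d)
    (hPR : ∀ i : Fin m, Peps ε d * R i = R i)
    (hPS : ∀ j : Fin n, Peps ε d * S j = S j)
    (hRnorm : ∑ i, star (R i) * R i = 1)
    (hRconj : ∀ i k : Fin m,
      star (R i) * ρ (R k) = ((-1 : ℂ) ^ (d - 1) * (d : ℂ)⁻¹) • (star (R i) * R k))
    (hSconj : ∀ j l : Fin n,
      star (S j) * ρ (S l) = ((-1 : ℂ) ^ (d - 1) * (d : ℂ)⁻¹) • (star (S j) * S l))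
    (hf : ∀ i k : Fin m, ∃ f : A, IsCentralFixed ρ f ∧
      R k * star (R i) = f * Peps ε d) :
    (∀ (i : Fin m) (j : Fin n), IsCentralFixed ρ (star (R i) * S j)) ∧
    (∀ j : Fin n, S j = ∑ i, R i * (star (R i) * S j)) ∧
    (∀ i : Fin m, R i = ∑ j, S j * star (star (R i) * S j)) := by
  classical
  set c : ℂ := (-1 : ℂ) ^ (d - 1) * (d : ℂ)⁻¹ with hc_def
  have hc : c ≠ 0 := by
    apply mul_ne_zero (pow_ne_zero _ (by norm_num))
    exact inv_ne_zero (Nat.cast_ne_zero.mpr (by omega))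
  -- f from hf
  choose f hfc hfe using hf
  -- a * R_i* = R_i* * ρ^d a
  have hstar_comm : ∀ (i : Fin m) (a : A),
      a * star (R i) = star (R i) * (⇑ρ)^[d] a := by
    intro i a
    have h := congrArg star (hR0 i (star a))
    simpa [star_mul, rho_iter_star] using h
  -- centrality of z = R_i* S_j
  have hz_comm : ∀ (i : Fin m) (j : Fin n) (a : A),
      (star (R i) * S j) * a = a * (star (R i) * S j) := by
    intro i j a
    rw [mul_assoc, hS0, ← mul_assoc, ← hstar_comm, mul_assoc]
  have hPstar : star (Peps ε d : A) = Peps ε d := star_Peps hws d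
  have hRP' : ∀ i : Fin m, star (R i) * Peps ε d = star (R i) := by
    intro i
    have h := congrArg star (hPR i)
    rwa [star_mul, hPstar] at h
  -- P ρ(S_j) = c • S_j
  have hPrhoS : ∀ j : Fin n, Peps ε d * ρ (S j) = c • S j := by
    intro j
    calc Peps ε d * ρ (S j) = (∑ l, S l * star (S l)) * ρ (S j) := by rw [hSP]
    _ = ∑ l, S l * (star (S l) * ρ (S j)) := by rw [Finset.sum_mul]; simp [mul_assoc]
    _ = ∑ l, S l * (c • (star (S l) * S j)) := by
          exact Finset.sum_congr rfl fun l _ => by rw [hSconj, hc_def]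
    _ = c • ((∑ l, S l * star (S l)) * S j) := by
          rw [Finset.sum_mul, Finset.smul_sum]
          exact Finset.sum_congr rfl fun l _ => by
            rw [mul_smul_comm, mul_assoc]
    _ = c • S j := by rw [hSP, hPS]
  -- cross relation
  have hcross : ∀ (i : Fin m) (j : Fin n),
      star (R i) * ρ (S j) = c • (star (R i) * S j) := by
    intro i j
    calc star (R i) * ρ (S j) = (star (R i) * Peps ε d) * ρ (S j) := by rw [hRP']
    _ = star (R i) * (Peps ε d * ρ (S j)) := mul_assoc _ _ _
    _ = star (R i) * (c • S j) := by rw [hPrhoS]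
    _ = c • (star (R i) * S j) := mul_smul_comm _ _ _
  -- R_k z = f_{ik} S_j
  have hRz : ∀ (i k : Fin m) (j : Fin n),
      R k * (star (R i) * S j) = f i k * S j := by
    intro i k j
    rw [← mul_assoc, hfe, mul_assoc, hPS]
  -- z = Σ_k f_{ik} z_{kj}
  have hzsum : ∀ (i : Fin m) (j : Fin n),
      star (R i) * S j = ∑ k, f i k * (star (R k) * S j) := by
    intro i j
    calc star (R i) * S j
        = (∑ k, star (R k) * R k) * (star (R i) * S j) := by rw [hRnorm, one_mul]
    _ = ∑ k, star (R k) * (R k * (star (R i) * S j)) := by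
          rw [Finset.sum_mul]; simp [mul_assoc]
    _ = ∑ k, star (R k) * (f i k * S j) := by simp_rw [hRz]
    _ = ∑ k, f i k * (star (R k) * S j) := by
          exact Finset.sum_congr rfl fun k _ => by
            rw [← mul_assoc, ← (hfc i k).1 (star (R k)), mul_assoc]
  -- Σ_k R_k* ρ(R_k) = c • 1
  have hsum_cR : (∑ k, star (R k) * ρ (R k)) = c • (1 : A) := by
    calc ∑ k, star (R k) * ρ (R k)
        = ∑ k, c • (star (R k) * R k) := by
          exact Finset.sum_congr rfl fun k _ => by rw [hRconj, hc_def]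
    _ = c • ∑ k, star (R k) * R k := (Finset.smul_sum).symm
    _ = c • (1 : A) := by rw [hRnorm]
  -- ρ-invariance of z
  have hrho_z : ∀ (i : Fin m) (j : Fin n),
      ρ (star (R i) * S j) = star (R i) * S j := by
    intro i j
    have key : c • ρ (star (R i) * S j) = c • (star (R i) * S j) := by
      calc c • ρ (star (R i) * S j)
          = (c • (1 : A)) * ρ (star (R i) * S j) := by rw [smul_mul_assoc, one_mul]
      _ = (∑ k, star (R k) * ρ (R k)) * ρ (star (R i) * S j) := by rw [hsum_cR]
      _ = ∑ k, star (R k) * ρ (R k * (star (R i) * S j)) := by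
            rw [Finset.sum_mul]
            exact Finset.sum_congr rfl fun k _ => by simp [map_mul, mul_assoc]
      _ = ∑ k, star (R k) * ρ (f i k * S j) := by simp_rw [hRz]
      _ = ∑ k, f i k * (star (R k) * ρ (S j)) := by
            exact Finset.sum_congr rfl fun k _ => by
              rw [map_mul, (hfc i k).2, ← mul_assoc, ← (hfc i k).1 (star (R k)),
                mul_assoc]
      _ = ∑ k, f i k * (c • (star (R k) * S j)) := by simp_rw [hcross]
      _ = c • ∑ k, f i k * (star (R k) * S j) := by
            rw [Finset.smul_sum]
            exact Finset.sum_congr rfl fun k _ => mul_smul_comm _ _ _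
      _ = c • (star (R i) * S j) := by rw [← hzsum]
    simpa [smul_smul, inv_mul_cancel₀ hc] using congrArg (c⁻¹ • ·) key
  refine ⟨fun i j => ⟨hz_comm i j, hrho_z i j⟩, ?_, ?_⟩
  · intro j
    calc S j = Peps ε d * S j := (hPS j).symm
    _ = (∑ i, R i * star (R i)) * S j := by rw [hRP]
    _ = ∑ i, R i * (star (R i) * S j) := by rw [Finset.sum_mul]; simp [mul_assoc]
  · intro i
    calc R i = Peps ε d * R i := (hPR i).symm
    _ = ∑ j, S j * (star (S j) * R i) := by
          rw [← hSP, Finset.sum_mul]; simp [mul_assoc]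
    _ = ∑ j, S j * star (star (R i) * S j) := by simp [star_mul]
end

section
/- Let B be a unital C*-algebra, A ⊆ B a unital C*-subalgebra with {b ∈ B : ab = ba for all a ∈ A} = A ∩ A' =: Z, ρ : A → A a unital *-homomorphism, and ψ_1,…,ψ_n ∈ B with ψ_l·a = ρ(a)·ψ_l for all a ∈ A and Σ_l ψ_l·ψ_l* = 1. Let M := {φ ∈ B : φ·a = ρ(a)·φ for all a ∈ A}. Then: (i) φ*·φ' ∈ Z for all φ, φ' ∈ M; (ii) z·φ·z' ∈ M for all z,z' ∈ Z and φ ∈ M; (iii) every φ ∈ M can be written φ = Σ_l ψ_l·z_l with z_l := ψ_l*·φ ∈ Z, so M = {Σ_l ψ_l·z_l : z_1,…,z_n ∈ Z}. Thus M is a Hilbert Z-bimodule in B inducing ρ. -/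
variable {B : Type*} [NormedRing B] [StarRing B] [CStarRing B] [CompleteSpace B]
  [NormedAlgebra ℂ B] [StarModule ℂ B]

/-- Membership in `Z := A ∩ A'`, the centre of the C*-subalgebra `A` of `B`. -/
def MemCentre (A : StarSubalgebra ℂ B) (z : B) : Prop :=
  z ∈ A ∧ ∀ a ∈ A, z * a = a * z

/-- Membership in `M := {φ ∈ B : φ·a = ρ(a)·φ for all a ∈ A}`. -/
def MemM (A : StarSubalgebra ℂ B) (ρ : A →⋆ₐ[ℂ] A) (φ : B) : Prop :=
  ∀ a : A, φ * (a : B) = (ρ a : B) * φ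

/-- Let `B` be a unital C*-algebra, `A ⊆ B` a unital C*-subalgebra
whose relative commutant in `B` coincides with the centre `Z := A ∩ A'` of `A`,
`ρ : A → A` a unital *-homomorphism, and `ψ_1, …, ψ_n ∈ B` with `ψ_l·a = ρ(a)·ψ_l`
for all `a ∈ A` and `Σ_l ψ_l·ψ_l* = 1`.  Let `M := {φ ∈ B : φ·a = ρ(a)·φ ∀ a ∈ A}`.
Then: (i) `φ*·φ' ∈ Z` for all `φ, φ' ∈ M`; (ii) `z·φ·z' ∈ M` for all `z, z' ∈ Z` and
`φ ∈ M`; (iii) every `φ ∈ M` can be written `φ = Σ_l ψ_l·z_l` with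
`z_l := ψ_l*·φ ∈ Z`, so that `M = {Σ_l ψ_l·z_l : z_1, …, z_n ∈ Z}`.  Thus `M` is a
Hilbert `Z`-bimodule in `B` inducing `ρ`. -/
theorem hilbert_bimodule_in_crossed_product
    (A : StarSubalgebra ℂ B) (hAclosed : IsClosed (A : Set B))
    (hZ : {b : B | ∀ a ∈ A, a * b = b * a} = {b : B | MemCentre A b})
    (ρ : A →⋆ₐ[ℂ] A) (n : ℕ) (ψ : Fin n → B)
    (hψ : ∀ (l : Fin n) (a : A), ψ l * (a : B) = (ρ a : B) * ψ l)
    (hsum : ∑ l, ψ l * star (ψ l) = 1) :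
    (∀ φ φ' : B, MemM A ρ φ → MemM A ρ φ' → MemCentre A (star φ * φ')) ∧
    (∀ z z' φ : B, MemCentre A z → MemCentre A z' → MemM A ρ φ →
      MemM A ρ (z * φ * z')) ∧
    (∀ φ : B, MemM A ρ φ →
      (∀ l : Fin n, MemCentre A (star (ψ l) * φ)) ∧
      φ = ∑ l, ψ l * (star (ψ l) * φ)) ∧
    (∀ φ : B, MemM A ρ φ ↔
      ∃ z : Fin n → B, (∀ l, MemCentre A (z l)) ∧ φ = ∑ l, ψ l * z l) := by

  have hmemZ : ∀ b : B, (∀ a ∈ A, a * b = b * a) → MemCentre A b := by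
    intro b hb
    have := Set.ext_iff.mp hZ b
    exact this.mp hb
  -- star φ commutation: a * star φ = star φ * ρ a
  have hstar : ∀ φ : B, MemM A ρ φ → ∀ a : A, (a : B) * star φ = star φ * (ρ a : B) := by
    intro φ hφ a
    have h := hφ (star a)
    have h' := congrArg star h
    simp only [star_mul, star_star] at h'
    have hc : ((star a : A) : B) = star (a : B) := rfl
    rw [hc, star_star] at h'
    have hr : ((ρ (star a) : A) : B) = star ((ρ a : A) : B) := by
      rw [map_star]; rfl
    rw [hr, star_star] at h'
    exact h'
  have hi : ∀ φ φ' : B, MemM A ρ φ → MemM A ρ φ' → MemCentre A (star φ * φ') := by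
    intro φ φ' hφ hφ'
    apply hmemZ
    intro a ha
    calc (a : B) * (star φ * φ') = ((a : B) * star φ) * φ' := by rw [mul_assoc]
      _ = (star φ * (ρ ⟨a, ha⟩ : B)) * φ' := by rw [hstar φ hφ ⟨a, ha⟩]
      _ = star φ * ((ρ ⟨a, ha⟩ : B) * φ') := by rw [mul_assoc]
      _ = star φ * (φ' * a) := by rw [← hφ' ⟨a, ha⟩]
      _ = star φ * φ' * a := by rw [mul_assoc]
  have hpsiM : ∀ l : Fin n, MemM A ρ (ψ l) := fun l a => hψ l a
  have hii : ∀ z z' φ : B, MemCentre A z → MemCentre A z' → MemM A ρ φ →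
      MemM A ρ (z * φ * z') := by
    intro z z' φ hz hz' hφ a
    calc z * φ * z' * (a : B) = z * φ * (z' * a) := by rw [mul_assoc]
      _ = z * φ * ((a : B) * z') := by rw [hz'.2 a a.2]
      _ = z * (φ * a) * z' := by simp only [mul_assoc]
      _ = z * ((ρ a : B) * φ) * z' := by rw [hφ a]
      _ = (z * (ρ a : B)) * φ * z' := by simp only [mul_assoc]
      _ = ((ρ a : B) * z) * φ * z' := by rw [hz.2 (ρ a) (ρ a).2]
      _ = (ρ a : B) * (z * φ * z') := by simp only [mul_assoc]
  have hiii : ∀ φ : B, MemM A ρ φ →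
      (∀ l : Fin n, MemCentre A (star (ψ l) * φ)) ∧
      φ = ∑ l, ψ l * (star (ψ l) * φ) := by
    intro φ hφ
    refine ⟨fun l => hi (ψ l) φ (hpsiM l) hφ, ?_⟩
    calc φ = (∑ l, ψ l * star (ψ l)) * φ := by rw [hsum, one_mul]
      _ = ∑ l, ψ l * star (ψ l) * φ := by rw [Finset.sum_mul]
      _ = ∑ l, ψ l * (star (ψ l) * φ) := by simp only [mul_assoc]
  refine ⟨hi, hii, hiii, ?_⟩
  intro φ
  constructor
  · intro hφ
    exact ⟨fun l => star (ψ l) * φ, (hiii φ hφ).1, (hiii φ hφ).2⟩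
  · rintro ⟨z, hz, rfl⟩
    intro a
    calc (∑ l, ψ l * z l) * (a : B) = ∑ l, ψ l * z l * a := by rw [Finset.sum_mul]
      _ = ∑ l, ψ l * ((a : B) * z l) := by
          refine Finset.sum_congr rfl fun l _ => ?_
          rw [mul_assoc, (hz l).2 a a.2]
      _ = ∑ l, (ψ l * a) * z l := by simp only [mul_assoc]
      _ = ∑ l, (ρ a : B) * (ψ l * z l) := by
          refine Finset.sum_congr rfl fun l _ => ?_
          rw [hψ l a, mul_assoc]
      _ = (ρ a : B) * ∑ l, ψ l * z l := by rw [Finset.mul_sum]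
end

section
/- Let B be a unital C*-algebra, A ⊆ B a unital C*-subalgebra with {b ∈ B : ab = ba for all a ∈ A} = A ∩ A' =: Z, ρ : A → A a unital *-homomorphism, and ψ_1,…,ψ_n ∈ B with ψ_l·a = ρ(a)·ψ_l for all a ∈ A and Σ_l ψ_l·ψ_l* = 1. For a multi-index L = (l_1,…,l_s) ∈ {1,…,n}^s write ψ_L := ψ_{l_1}···ψ_{l_s}. Then for all r,s ∈ ℕ and every t ∈ B with t·ρ^r(a) = ρ^s(a)·t for all a ∈ A: each element t_{LM} := ψ_L*·t·ψ_M (with |L| = s, |M| = r) belongs to Z, and t = Σ_{|L|=s, |M|=r} ψ_L·t_{LM}·ψ_M*. -/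
variable {B : Type*} [NormedRing B] [StarRing B] [CStarRing B] [CompleteSpace B]
  [NormedAlgebra ℂ B] [StarModule ℂ B]

/-- The ordered product `ψ_L := ψ_{l_1} ⋯ ψ_{l_s}` associated with a multi-index
`L = (l_1, …, l_s)`. -/
def psiProd {n : ℕ} (ψ : Fin n → B) {s : ℕ} (L : Fin s → Fin n) : B :=
  (List.ofFn fun i => ψ (L i)).prod

set_option linter.unusedSectionVars false

lemma psiProd_zero {n : ℕ} (ψ : Fin n → B) (L : Fin 0 → Fin n) : psiProd ψ L = 1 := by
  simp [psiProd]

lemma psiProd_succ {n : ℕ} (ψ : Fin n → B) {s : ℕ} (L : Fin (s+1) → Fin n) :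
    psiProd ψ L = ψ (L 0) * psiProd ψ (fun i => L i.succ) := by
  simp [psiProd, List.ofFn_succ]

lemma psiProd_comm {A : StarSubalgebra ℂ B} (ρ : A →⋆ₐ[ℂ] A) {n : ℕ} {ψ : Fin n → B}
    (hψ : ∀ (l : Fin n) (a : A), ψ l * (a : B) = (ρ a : B) * ψ l) :
    ∀ {s : ℕ} (L : Fin s → Fin n) (a : A),
      psiProd ψ L * (a : B) = (((⇑ρ)^[s] a : A) : B) * psiProd ψ L := by
  intro s
  induction s with
  | zero => intro L a; simp [psiProd_zero]
  | succ s ih =>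
    intro L a
    rw [psiProd_succ, mul_assoc, ih, ← mul_assoc, hψ, Function.iterate_succ_apply', mul_assoc]

lemma iter_star {A : StarSubalgebra ℂ B} (ρ : A →⋆ₐ[ℂ] A) (s : ℕ) (a : A) :
    (⇑ρ)^[s] (star a) = star ((⇑ρ)^[s] a) := by
  induction s with
  | zero => rfl
  | succ s ih => simp [Function.iterate_succ_apply', ih, map_star]

lemma psiProd_comm_star {A : StarSubalgebra ℂ B} (ρ : A →⋆ₐ[ℂ] A) {n : ℕ} {ψ : Fin n → B}
    (hψ : ∀ (l : Fin n) (a : A), ψ l * (a : B) = (ρ a : B) * ψ l)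
    {s : ℕ} (L : Fin s → Fin n) (a : A) :
    (a : B) * star (psiProd ψ L) = star (psiProd ψ L) * (((⇑ρ)^[s] a : A) : B) := by
  have h := congrArg star (psiProd_comm ρ hψ L (star a))
  simp only [star_mul, star_star, MulMemClass.coe_mul] at h ⊢
  rw [show ((star a : A) : B) = star (a : B) from rfl] at h
  rw [iter_star] at h
  rw [show ((star ((⇑ρ)^[s] a) : A) : B) = star (((⇑ρ)^[s] a : A) : B) from rfl] at h
  simpa [star_star] using h

lemma psiProd_sum {n : ℕ} (ψ : Fin n → B) (hsum : ∑ l, ψ l * star (ψ l) = 1) :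
    ∀ s : ℕ, ∑ L : Fin s → Fin n, psiProd ψ L * star (psiProd ψ L) = 1 := by
  intro s
  induction s with
  | zero =>
    rw [Finset.sum_eq_single_of_mem (fun i => i.elim0) (Finset.mem_univ _)]
    · simp [psiProd_zero]
    · intro b _ hb; exact absurd (funext fun i => i.elim0) hb
  | succ s ih =>
    rw [← (Fin.consEquiv (fun _ : Fin (s+1) => Fin n)).sum_comp
      (fun L => psiProd ψ L * star (psiProd ψ L))]
    rw [Fintype.sum_prod_type]
    have : ∀ (l : Fin n) (L : Fin s → Fin n),
        psiProd ψ (Fin.consEquiv (fun _ : Fin (s+1) => Fin n) (l, L)) = ψ l * psiProd ψ L := by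
      intro l L
      rw [psiProd_succ]
      simp [Fin.consEquiv]
    simp only [this, star_mul]
    have h2 : ∀ l : Fin n, ∑ L : Fin s → Fin n,
        ψ l * psiProd ψ L * (star (psiProd ψ L) * star (ψ l)) = ψ l * star (ψ l) := by
      intro l
      have : ∀ L : Fin s → Fin n, ψ l * psiProd ψ L * (star (psiProd ψ L) * star (ψ l))
          = ψ l * (psiProd ψ L * star (psiProd ψ L)) * star (ψ l) := by
        intro L; simp [mul_assoc]
      simp only [this, ← Finset.sum_mul, ← Finset.mul_sum, ih, mul_one]
    simp only [h2, hsum]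

/-- Let `B` be a unital C*-algebra, `A ⊆ B` a unital C*-subalgebra
whose relative commutant in `B` coincides with the centre `Z := A ∩ A'` of `A`,
`ρ : A → A` a unital *-homomorphism, and `ψ_1, …, ψ_n ∈ B` with `ψ_l·a = ρ(a)·ψ_l` for
all `a ∈ A` and `Σ_l ψ_l·ψ_l* = 1`.  Then for all `r, s ∈ ℕ` and every `t ∈ B` with
`t·ρ^r(a) = ρ^s(a)·t` for all `a ∈ A`: each element `t_{LM} := ψ_L*·t·ψ_M` (with
`|L| = s`, `|M| = r`) belongs to `Z`, and `t = Σ_{|L|=s, |M|=r} ψ_L·t_{LM}·ψ_M*`. -/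

theorem intertwiner_expansion
    (A : StarSubalgebra ℂ B) (hAclosed : IsClosed (A : Set B))
    (hZ : {b : B | ∀ a ∈ A, a * b = b * a} = {b : B | MemCentre A b})
    (ρ : A →⋆ₐ[ℂ] A) (n : ℕ) (ψ : Fin n → B)
    (hψ : ∀ (l : Fin n) (a : A), ψ l * (a : B) = (ρ a : B) * ψ l)
    (hsum : ∑ l, ψ l * star (ψ l) = 1) :
    ∀ (r s : ℕ) (t : B), (∀ a : A, t * ((⇑ρ)^[r] a : B) = ((⇑ρ)^[s] a : B) * t) →
      (∀ (L : Fin s → Fin n) (M : Fin r → Fin n),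
        MemCentre A (star (psiProd ψ L) * t * psiProd ψ M)) ∧
      t = ∑ L : Fin s → Fin n, ∑ M : Fin r → Fin n,
            psiProd ψ L * (star (psiProd ψ L) * t * psiProd ψ M) * star (psiProd ψ M) := by
  intro r s t ht
  constructor
  · intro L M
    have hmem : (star (psiProd ψ L) * t * psiProd ψ M)
        ∈ {b : B | ∀ a ∈ A, a * b = b * a} := by
      intro a ha
      set a' : A := ⟨a, ha⟩ with ha'
      have h1 := psiProd_comm_star ρ hψ L a'
      have h2 := ht a'
      have h3 := psiProd_comm ρ hψ M a'
      calc (a' : B) * (star (psiProd ψ L) * t * psiProd ψ M)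
          = ((a' : B) * star (psiProd ψ L)) * (t * psiProd ψ M) := by
            simp only [mul_assoc]
        _ = (star (psiProd ψ L) * (((⇑ρ)^[s] a' : A) : B)) * (t * psiProd ψ M) := by
            rw [h1]
        _ = star (psiProd ψ L) * (((((⇑ρ)^[s] a' : A) : B) * t) * psiProd ψ M) := by
            simp only [mul_assoc]
        _ = star (psiProd ψ L) * ((t * (((⇑ρ)^[r] a' : A) : B)) * psiProd ψ M) := by
            rw [h2]
        _ = star (psiProd ψ L) * (t * ((((⇑ρ)^[r] a' : A) : B) * psiProd ψ M)) := by
            simp only [mul_assoc]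
        _ = star (psiProd ψ L) * (t * (psiProd ψ M * (a' : B))) := by rw [h3]
        _ = (star (psiProd ψ L) * t * psiProd ψ M) * (a' : B) := by
            simp only [mul_assoc]
    rw [hZ] at hmem
    exact hmem
  · have key := psiProd_sum ψ hsum
    calc t = 1 * t * 1 := by rw [one_mul, mul_one]
      _ = (∑ L : Fin s → Fin n, psiProd ψ L * star (psiProd ψ L)) * t
            * (∑ M : Fin r → Fin n, psiProd ψ M * star (psiProd ψ M)) := by
          rw [key s, key r]
      _ = ∑ L : Fin s → Fin n, ∑ M : Fin r → Fin n,
            psiProd ψ L * (star (psiProd ψ L) * t * psiProd ψ M) * star (psiProd ψ M) := by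
          rw [Finset.sum_mul, Finset.sum_mul]
          simp only [Finset.mul_sum, mul_assoc]
end

section
/- Let B be a unital C*-algebra and ψ_1,…,ψ_n ∈ B elements such that every product ψ_l*·ψ_m is central in B and Σ_l ψ_l·ψ_l* = 1. Define θ := Σ_{l,m} ψ_m·ψ_l·ψ_m*·ψ_l*. Then θ is a self-adjoint unitary (θ = θ*, θ² = 1) and θ·ψ_j·ψ_k = ψ_k·ψ_j for all j,k; i.e. θ is the flip operator implementing the permutation symmetry of the canonical shift endomorphism. -/
/-- Let `B` be a unital C*-algebra and `ψ_1, …, ψ_n ∈ B` elements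
such that every product `ψ_l*·ψ_m` is central in `B` and `Σ_l ψ_l·ψ_l* = 1` (the
Cuntz–Pimsner-type relations of a module of sections of a vector bundle).  Define
`θ := Σ_{l,m} ψ_m·ψ_l·ψ_m*·ψ_l*`.  Then `θ` is a self-adjoint unitary (`θ = θ*`,
`θ² = 1`) and `θ·ψ_j·ψ_k = ψ_k·ψ_j` for all `j, k`: `θ` is the flip operator
implementing the permutation symmetry of the canonical shift endomorphism. -/
theorem flip_operator_properties
    {B : Type*} [NormedRing B] [StarRing B] [CStarRing B] [CompleteSpace B]
    [NormedAlgebra ℂ B] [StarModule ℂ B]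
    (n : ℕ) (ψ : Fin n → B)
    (hcentral : ∀ (l m : Fin n) (b : B), (star (ψ l) * ψ m) * b = b * (star (ψ l) * ψ m))
    (hsum : ∑ l, ψ l * star (ψ l) = 1)
    (θ : B) (hθ : θ = ∑ l, ∑ m, ψ m * ψ l * star (ψ m) * star (ψ l)) :
    star θ = θ ∧ θ * θ = 1 ∧ ∀ j k : Fin n, θ * (ψ j * ψ k) = ψ k * ψ j := by
  have flip : ∀ j k : Fin n, θ * (ψ j * ψ k) = ψ k * ψ j := by
    intro j k
    have hterm : ∀ l m : Fin n, (ψ m * ψ l * star (ψ m) * star (ψ l)) * (ψ j * ψ k)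
        = (ψ m * star (ψ m)) * (ψ k * (ψ l * star (ψ l)) * ψ j) := by
      intro l m
      calc (ψ m * ψ l * star (ψ m) * star (ψ l)) * (ψ j * ψ k)
          = ψ m * ψ l * star (ψ m) * ((star (ψ l) * ψ j) * ψ k) := by
            simp [mul_assoc]
        _ = ψ m * ψ l * star (ψ m) * (ψ k * (star (ψ l) * ψ j)) := by
            rw [hcentral l j (ψ k)]
        _ = ψ m * (ψ l * (star (ψ m) * ψ k)) * (star (ψ l) * ψ j) := by
            simp [mul_assoc]
        _ = ψ m * ((star (ψ m) * ψ k) * ψ l) * (star (ψ l) * ψ j) := by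
            rw [← hcentral m k (ψ l)]
        _ = (ψ m * star (ψ m)) * (ψ k * (ψ l * star (ψ l)) * ψ j) := by
            simp [mul_assoc]
    rw [hθ]
    rw [Finset.sum_mul]
    simp_rw [Finset.sum_mul, hterm, ← Finset.sum_mul, hsum, one_mul]
    rw [show (∑ l, ψ k * (ψ l * star (ψ l)) * ψ j)
        = ψ k * (∑ l, ψ l * star (ψ l)) * ψ j by
      rw [Finset.mul_sum, Finset.sum_mul]]
    rw [hsum, mul_one]
  refine ⟨?_, ?_, flip⟩
  · rw [hθ]
    simp only [star_sum, star_mul, star_star, ← mul_assoc]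
    exact Finset.sum_comm
  · have : ∀ l m : Fin n, θ * (ψ m * ψ l * star (ψ m) * star (ψ l))
        = ψ l * (ψ m * star (ψ m)) * star (ψ l) := by
      intro l m
      calc θ * (ψ m * ψ l * star (ψ m) * star (ψ l))
          = (θ * (ψ m * ψ l)) * (star (ψ m) * star (ψ l)) := by simp [mul_assoc]
        _ = (ψ l * ψ m) * (star (ψ m) * star (ψ l)) := by rw [flip]
        _ = ψ l * (ψ m * star (ψ m)) * star (ψ l) := by simp [mul_assoc]
    nth_rewrite 2 [hθ]
    rw [Finset.mul_sum]
    simp_rw [Finset.mul_sum, this]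
    have h2 : ∀ l : Fin n, (∑ m, ψ l * (ψ m * star (ψ m)) * star (ψ l)) = ψ l * star (ψ l) := by
      intro l
      rw [show (∑ m, ψ l * (ψ m * star (ψ m)) * star (ψ l))
          = ψ l * (∑ m, ψ m * star (ψ m)) * star (ψ l) by
        rw [Finset.mul_sum, Finset.sum_mul], hsum, mul_one]
    simp_rw [h2, hsum]
end
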